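/- Suppose a sequence of families 𝓜₁ ⊇-in-size 𝓜₂, ..., of vertex-disjoint non-trivial paths is built so that each 𝓜_{i+1} is a (d,k_i)-extension of 𝓜_i with fixed d. If 𝓜₁ is a matching with m edges, then V(𝓜_j) has at most (d+3)·m vertices for every j. -/

import Mathlib

open Finset

variable {V : Type*}

/-- A path in `G`, packaged with its endpoints. -/
abbrev PathIn (G : SimpleGraph V) := Σ u : V, Σ v : V, {w : G.Walk u v // w.IsPath}

/-- The length of a packaged path. -/
def plen {G : SimpleGraph V} (p : PathIn G) : ℕ := p.2.2.1.length

/-- The support (vertex list) of a packaged path. -/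
def psupp {G : SimpleGraph V} (p : PathIn G) : List V := p.2.2.1.support

/-- The union of the vertex sets of the paths of a family. -/
def Vset [DecidableEq V] {G : SimpleGraph V} (M : Finset (PathIn G)) : Finset V :=
  M.biUnion (fun p => (psupp p).toFinset)

/-- The union of the edge sets of the paths of a family. -/
def Eset [DecidableEq V] {G : SimpleGraph V} (M : Finset (PathIn G)) : Finset (Sym2 V) :=
  M.biUnion (fun p => p.2.2.1.edges.toFinset)

/-- A family of non-trivial vertex-disjoint paths. -/
def goodFam {G : SimpleGraph V} (M : Finset (PathIn G)) : Prop :=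
  (∀ p ∈ M, 0 < plen p) ∧
  (∀ p ∈ M, ∀ q ∈ M, p ≠ q → ∀ v, v ∈ psupp p → v ∉ psupp q)

/-- `M'` is a `(d,k)`-extension of `M`. -/
def isExtension [DecidableEq V] {G : SimpleGraph V} (d k : ℕ)
    (M M' : Finset (PathIn G)) : Prop :=
  goodFam M' ∧ M'.card ≤ M.card ∧
  ((Eset M) \ (Eset M')).card ≤ 2 * (k - 1) * (M.card - M'.card) ∧
  ((Eset M') \ (Eset M)).card ≤ (d + 2) * (M.card - M'.card)

/-- `M` is a size-minimum `(d,k)`-extension of itself. -/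
def sizeMinSelf [DecidableEq V] {G : SimpleGraph V} (d k : ℕ)
    (M : Finset (PathIn G)) : Prop :=
  goodFam M ∧ ∀ M' : Finset (PathIn G), isExtension d k M M' → M.card ≤ M'.card

/-- The `k`-end of a path: vertices within path-distance `k-1` of an endpoint. -/
def kEnd [DecidableEq V] {G : SimpleGraph V} (k : ℕ) (p : PathIn G) : Finset V :=
  ((psupp p).take k).toFinset ∪ ((psupp p).reverse.take k).toFinset


lemma supp_card_aux {G : SimpleGraph V} [DecidableEq V] (p : PathIn G) :
    (psupp p).toFinset.card = plen p + 1 := by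
  rw [psupp, List.toFinset_card_of_nodup p.2.2.2.support_nodup]
  simp [psupp, plen]

lemma edges_card_aux {G : SimpleGraph V} [DecidableEq V] (p : PathIn G) :
    p.2.2.1.edges.toFinset.card = plen p := by
  rw [List.toFinset_card_of_nodup p.2.2.2.edges_nodup]
  simp [plen]

lemma edges_disj_aux {G : SimpleGraph V} [DecidableEq V] {M : Finset (PathIn G)}
    (h : goodFam M) {p q : PathIn G} (hp : p ∈ M) (hq : q ∈ M) (hpq : p ≠ q) :
    Disjoint p.2.2.1.edges.toFinset q.2.2.1.edges.toFinset := by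
  rw [Finset.disjoint_left]
  intro e hep heq
  simp only [List.mem_toFinset] at hep heq
  induction e with
  | h a b =>
    exact h.2 p hp q hq hpq a
      (SimpleGraph.Walk.fst_mem_support_of_mem_edges _ hep)
      (SimpleGraph.Walk.fst_mem_support_of_mem_edges _ heq)

lemma Eset_card_aux {G : SimpleGraph V} [DecidableEq V] {M : Finset (PathIn G)}
    (h : goodFam M) : (Eset M).card = ∑ p ∈ M, plen p := by
  rw [Eset, Finset.card_biUnion (fun p hp q hq hpq => edges_disj_aux h hp hq hpq)]
  exact Finset.sum_congr rfl fun p _ => edges_card_aux p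

lemma Vset_card_aux {G : SimpleGraph V} [DecidableEq V] {M : Finset (PathIn G)}
    (h : goodFam M) : (Vset M).card = (Eset M).card + M.card := by
  rw [Eset_card_aux h, Vset, Finset.card_biUnion]
  · rw [Finset.sum_congr rfl fun p (_ : p ∈ M) => supp_card_aux p, Finset.sum_add_distrib]
    simp
  · intro p hp q hq hpq
    rw [Function.onFun, Finset.disjoint_left]
    intro v hvp hvq
    simp only [List.mem_toFinset] at hvp hvq
    exact h.2 p hp q hq hpq v hvp hvq

/-- if `M 0` is a matching with `m` edges (a family of vertex-disjoint
paths of length `1`), and each `M (i+1)` is a `(d, k i)`-extension of `M i` (fixed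
`d`, varying `k`), then every `M j` spans at most `(d+3)·m` vertices. -/
theorem stmt14 [DecidableEq V] {G : SimpleGraph V} (d m : ℕ) (k : ℕ → ℕ)
    (M : ℕ → Finset (PathIn G))
    (hfam : goodFam (M 0)) (hlen : ∀ p ∈ M 0, plen p = 1)
    (hm : (Eset (M 0)).card = m)
    (hext : ∀ i, isExtension d (k i) (M i) (M (i + 1))) :
    ∀ j, (Vset (M j)).card ≤ (d + 3) * m := by
  have hgood : ∀ j, goodFam (M j) := by
    intro j
    cases j with
    | zero => exact hfam
    | succ i => exact (hext i).1
  have hcard0 : (M 0).card = m := by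
    rw [← hm, Eset_card_aux hfam]
    rw [Finset.sum_congr rfl hlen]
    simp
  have key : ∀ j, (Eset (M j)).card + (d + 2) * (M j).card ≤ (d + 3) * m := by
    intro j
    induction j with
    | zero => rw [hm, hcard0]; ring_nf; omega
    | succ i ih =>
      obtain ⟨_, hc, _, hE⟩ := hext i
      have hsub : Eset (M (i+1)) ⊆ Eset (M i) ∪ (Eset (M (i+1)) \ Eset (M i)) := by
        intro x hx
        by_cases hxi : x ∈ Eset (M i)
        · exact Finset.mem_union_left _ hxi
        · exact Finset.mem_union_right _ (Finset.mem_sdiff.mpr ⟨hx, hxi⟩)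
      have h1 : (Eset (M (i+1))).card ≤ (Eset (M i)).card +
          ((Eset (M (i+1)) \ Eset (M i))).card :=
        le_trans (Finset.card_le_card hsub) (Finset.card_union_le _ _)
      have h2 : (d + 2) * ((M i).card - (M (i+1)).card) + (d + 2) * (M (i+1)).card
          = (d + 2) * (M i).card := by
        rw [← Nat.mul_add, Nat.sub_add_cancel hc]
      omega
  intro j
  have h3 : (M j).card ≤ (d + 2) * (M j).card := Nat.le_mul_of_pos_left _ (by omega)
  have := key j
  rw [Vset_card_aux (hgood j)]
  omega
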